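/- arXiv:2209.09820 — 5 statements merged into one kernel-verified Lean document; each statement's English description precedes it below -/
import Mathlib

section
/- For the binary entropy function h₁(t) = −t ln t − (1−t) ln(1−t) (with h₁(0) = h₁(1) = 0), the functional I(h₁) = (1/(4π²)) ∫₀¹ (h₁(t) − t·h₁(1)) / (t(1−t)) dt equals 1/12. -/
open MeasureTheory Set Real

noncomputable def entF (n : ℕ) (t : ℝ) : ℝ := (t ^ n + (1 - t) ^ n) / ((n : ℝ) + 1)

lemma entF_cont (n : ℕ) : Continuous (entF n) := by
  unfold entF
  fun_prop

lemma entF_nonneg (n : ℕ) {t : ℝ} (ht : t ∈ Set.Icc (0:ℝ) 1) : 0 ≤ entF n t := by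
  obtain ⟨h0, h1⟩ := ht
  have : (0:ℝ) ≤ t ^ n := pow_nonneg h0 n
  have : (0:ℝ) ≤ (1 - t) ^ n := pow_nonneg (by linarith) n
  have : (0:ℝ) < (n:ℝ) + 1 := by positivity
  unfold entF
  positivity

lemma entF_hasSum {t : ℝ} (ht : t ∈ Set.Ioo (0:ℝ) 1) :
    HasSum (fun n => entF n t)
      ((-t * Real.log t - (1 - t) * Real.log (1 - t)) / (t * (1 - t))) := by
  obtain ⟨ht0, ht1⟩ := ht
  have habs1 : |t| < 1 := by rw [abs_of_pos ht0]; exact ht1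
  have habs2 : |1 - t| < 1 := by rw [abs_of_pos (by linarith)]; linarith
  have h1 := (Real.hasSum_pow_div_log_of_abs_lt_one habs1).div_const t
  have h2 := (Real.hasSum_pow_div_log_of_abs_lt_one habs2).div_const (1 - t)
  rw [sub_sub_cancel] at h2
  have h := h1.add h2
  have htne : t ≠ 0 := ne_of_gt ht0
  have ht1ne : (1:ℝ) - t ≠ 0 := by linarith
  have hfun : (fun n : ℕ => t ^ (n + 1) / ((n : ℝ) + 1) / t
      + (1 - t) ^ (n + 1) / ((n : ℝ) + 1) / (1 - t)) = fun n => entF n t := by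
    funext n
    have hn : ((n : ℝ) + 1) ≠ 0 := by positivity
    unfold entF
    rw [pow_succ, pow_succ]
    field_simp
  rw [hfun] at h
  convert h using 1
  · rfl
  field_simp
  ring

lemma entF_integral (n : ℕ) :
    ∫ t in (0:ℝ)..1, entF n t = 2 / ((n : ℝ) + 1) ^ 2 := by
  have hn : ((n : ℝ) + 1) ≠ 0 := by positivity
  have hint1 : IntervalIntegrable (fun t : ℝ => t ^ n) volume 0 1 :=
    (continuous_pow n).intervalIntegrable 0 1
  have hint2 : IntervalIntegrable (fun t : ℝ => (1 - t) ^ n) volume 0 1 := by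
    apply Continuous.intervalIntegrable; fun_prop
  have h2 : ∫ t in (0:ℝ)..1, (1 - t) ^ n = ∫ t in (0:ℝ)..1, t ^ n := by
    have := intervalIntegral.integral_comp_sub_left (a := (0:ℝ)) (b := 1)
      (fun x : ℝ => x ^ n) 1
    simpa using this
  unfold entF
  rw [intervalIntegral.integral_div, intervalIntegral.integral_add hint1 hint2, h2,
    integral_pow]
  field_simp
  ring

lemma entF_tsum_integral :
    ∫ t in Set.Ioo (0:ℝ) 1, (∑' n, entF n t) = Real.pi ^ 2 / 3 := by
  have hhsum : HasSum (fun n : ℕ => 2 / ((n : ℝ) + 1) ^ 2) (Real.pi ^ 2 / 3) := by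
    have h0 := hasSum_zeta_two
    have h1 := (hasSum_nat_add_iff' (f := fun n : ℕ => (1:ℝ) / (n:ℝ) ^ 2) 1).2 h0
    simp only [Finset.range_one, Finset.sum_singleton, Nat.cast_zero] at h1
    norm_num at h1
    have h2 := h1.mul_left 2
    have hf : (fun n : ℕ => 2 / ((n : ℝ) + 1) ^ 2) = fun i : ℕ => 2 * (((i:ℝ) + 1) ^ 2)⁻¹ := by
      funext i; rw [div_eq_mul_inv]
    rw [hf]
    convert h2 using 1
    · rfl
    ring
  have hsummable : Summable (fun n : ℕ => 2 / ((n : ℝ) + 1) ^ 2) := hhsum.summable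
  have hintOn : ∀ n, IntegrableOn (entF n) (Set.Ioo (0:ℝ) 1) volume := fun n =>
    ((entF_cont n).integrableOn_Icc (a := 0) (b := 1)).mono_set Set.Ioo_subset_Icc_self
  have hnn : ∀ n : ℕ, 0 ≤ᵐ[volume.restrict (Set.Ioo (0:ℝ) 1)] entF n := by
    intro n
    rw [Filter.EventuallyLE, ae_restrict_iff' measurableSet_Ioo]
    filter_upwards with t ht
    exact entF_nonneg n (Set.Ioo_subset_Icc_self ht)
  have hval : ∀ n : ℕ, ∫ t in Set.Ioo (0:ℝ) 1, entF n t = 2 / ((n : ℝ) + 1) ^ 2 := by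
    intro n
    rw [← MeasureTheory.integral_Ioc_eq_integral_Ioo,
      ← intervalIntegral.integral_of_le (by norm_num : (0:ℝ) ≤ 1)]
    exact entF_integral n
  have hkey := MeasureTheory.integral_tsum (μ := volume.restrict (Set.Ioo (0:ℝ) 1))
    (f := fun n t => entF n t)
    (fun n => ((entF_cont n).aestronglyMeasurable))
    (by
      have heq : ∀ n : ℕ, ∫⁻ t, ‖entF n t‖ₑ ∂(volume.restrict (Set.Ioo (0:ℝ) 1))
          = ENNReal.ofReal (2 / ((n : ℝ) + 1) ^ 2) := by
        intro n
        rw [← hval n, MeasureTheory.ofReal_integral_eq_lintegral_ofReal (hintOn n) (hnn n)]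
        apply lintegral_congr_ae
        filter_upwards [hnn n] with t ht
        rw [← ofReal_norm, Real.norm_of_nonneg ht]
      rw [funext heq] at *
      rw [← ENNReal.ofReal_tsum_of_nonneg (fun n => by positivity) hsummable]
      exact ENNReal.ofReal_ne_top)
  rw [hkey, tsum_congr hval]
  exact hhsum.tsum_eq

/-- For the binary entropy function `h₁(t) = −t ln t − (1−t) ln(1−t)` (with `h₁(1) = 0`),
the functional `I(h₁) = (1/(4π²)) ∫₀¹ (h₁(t) − t h₁(1))/(t(1−t)) dt` equals `1/12`. -/
theorem functional_I_entropy :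
    (1 / (4 * Real.pi ^ 2)) * ∫ t in (0:ℝ)..1,
      ((-t * Real.log t - (1 - t) * Real.log (1 - t))
        - t * (-1 * Real.log 1 - (1 - 1) * Real.log (1 - 1))) / (t * (1 - t))
      = 1 / 12 := by
  have hsimp : ∀ t : ℝ, ((-t * Real.log t - (1 - t) * Real.log (1 - t))
        - t * (-1 * Real.log 1 - (1 - 1) * Real.log (1 - 1))) / (t * (1 - t))
      = (-t * Real.log t - (1 - t) * Real.log (1 - t)) / (t * (1 - t)) := by
    intro t; simp [Real.log_one]
  have hmain : (∫ t in (0:ℝ)..1,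
      ((-t * Real.log t - (1 - t) * Real.log (1 - t))
        - t * (-1 * Real.log 1 - (1 - 1) * Real.log (1 - 1))) / (t * (1 - t)))
      = Real.pi ^ 2 / 3 := by
    simp only [hsimp]
    rw [intervalIntegral.integral_of_le (by norm_num : (0:ℝ) ≤ 1),
      MeasureTheory.integral_Ioc_eq_integral_Ioo]
    rw [← entF_tsum_integral]
    apply MeasureTheory.setIntegral_congr_fun measurableSet_Ioo
    intro t ht
    exact ((entF_hasSum ht).tsum_eq).symm
  rw [hmain]
  have hpi : Real.pi ≠ 0 := Real.pi_ne_zero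
  field_simp
  ring
end

section
/- Let f : ℝ⁺ → ℝ⁺ be bounded with f(L) → 0 as L → ∞. Then there exists a convex, non-increasing function E : ℝ⁺ → ℝ⁺ with E(0) = 1, E(L) → 0 as L → ∞, f(L)/E(L) → 0 as L → ∞, and E(L) ≥ C/√(ln(2+L)) for some constant C > 0 and all L ≥ 0. -/
open Set Filter Real

/-- Convex decaying envelope lemma. -/
theorem convex_envelope_exists (f : ℝ → ℝ) (hpos : ∀ x, 0 ≤ x → 0 < f x)
    (hbdd : ∃ M : ℝ, ∀ x, 0 ≤ x → f x ≤ M)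
    (hlim : Filter.Tendsto f Filter.atTop (nhds 0)) :
    ∃ E : ℝ → ℝ, ConvexOn ℝ (Set.Ici 0) E ∧ AntitoneOn E (Set.Ici 0) ∧
      E 0 = 1 ∧ (∀ x, 0 ≤ x → 0 < E x) ∧
      Filter.Tendsto E Filter.atTop (nhds 0) ∧
      Filter.Tendsto (fun x => f x / E x) Filter.atTop (nhds 0) ∧
      ∃ C : ℝ, 0 < C ∧ ∀ x, 0 ≤ x → C / Real.sqrt (Real.log (2 + x)) ≤ E x := by
  obtain ⟨M, hM⟩ := hbdd
  -- the tail sup of f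
  set S : ℝ → ℝ := fun x => sSup (f '' Ici (max x 0)) with hSdef
  have hSne : ∀ x : ℝ, (f '' Ici (max x 0)).Nonempty :=
    fun x => ⟨f (max x 0), mem_image_of_mem f self_mem_Ici⟩
  have hSbdd : ∀ x : ℝ, BddAbove (f '' Ici (max x 0)) := by
    intro x
    refine ⟨M, ?_⟩
    rintro y ⟨t, ht, rfl⟩
    exact hM t (le_trans (le_max_right x 0) ht)
  have hSge : ∀ x : ℝ, f (max x 0) ≤ S x := fun x => le_csSup (hSbdd x) ⟨_, self_mem_Ici, rfl⟩
  have hSpos : ∀ x : ℝ, 0 < S x := fun x => lt_of_lt_of_le (hpos _ (le_max_right x 0)) (hSge x)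
  have hSanti : Antitone S := by
    intro x y hxy
    refine csSup_le_csSup (hSbdd x) (hSne y) (image_mono ?_)
    exact Ici_subset_Ici.mpr (max_le_max hxy le_rfl)
  have hSlim : Tendsto S atTop (nhds 0) := by
    rw [Metric.tendsto_atTop] at hlim ⊢
    intro ε hε
    obtain ⟨N, hN⟩ := hlim (ε / 2) (by linarith)
    refine ⟨max N 0, fun x hx => ?_⟩
    have hS2 : S x ≤ ε / 2 := by
      refine csSup_le (hSne x) ?_
      rintro y ⟨t, ht, rfl⟩
      have htN : N ≤ t := le_trans (le_trans (le_max_left N 0) hx) (le_trans (le_max_left x 0) ht)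
      have := hN t htN
      rw [Real.dist_eq, sub_zero] at this
      exact le_of_lt (lt_of_abs_lt this)
    rw [Real.dist_eq, sub_zero, abs_of_pos (hSpos x)]
    linarith
  -- the comparison function q
  set q : ℝ → ℝ := fun x => Real.sqrt (S x) + (Real.sqrt (Real.log (2 + max x 0)))⁻¹ with hqdef
  have hlog_pos : ∀ x : ℝ, 0 < Real.log (2 + max x 0) := by
    intro x
    apply Real.log_pos
    have := le_max_right x 0
    linarith
  have hqpos : ∀ x : ℝ, 0 < q x := by
    intro x
    have h1 : 0 < Real.sqrt (S x) := Real.sqrt_pos.mpr (hSpos x)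
    have h2 : 0 < (Real.sqrt (Real.log (2 + max x 0)))⁻¹ :=
      inv_pos.mpr (Real.sqrt_pos.mpr (hlog_pos x))
    exact add_pos h1 h2
  have hqanti : Antitone q := by
    intro x y hxy
    apply add_le_add
    · exact Real.sqrt_le_sqrt (hSanti hxy)
    · apply inv_anti₀ (Real.sqrt_pos.mpr (hlog_pos x))
      apply Real.sqrt_le_sqrt
      apply Real.log_le_log (by have := le_max_right x 0; linarith)
      have := max_le_max hxy (le_refl (0:ℝ))
      linarith
  have hqlim : Tendsto q atTop (nhds 0) := by
    have h1 : Tendsto (fun x => Real.sqrt (S x)) atTop (nhds 0) := by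
      have := hSlim.sqrt
      rwa [Real.sqrt_zero] at this
    have h2 : Tendsto (fun x => (Real.sqrt (Real.log (2 + max x 0)))⁻¹) atTop (nhds 0) := by
      apply Filter.Tendsto.inv_tendsto_atTop
      have hsq : Tendsto Real.sqrt atTop atTop := by
        apply tendsto_atTop_atTop.mpr
        intro b
        refine ⟨(max b 0) ^ 2, fun a ha => ?_⟩
        calc b ≤ max b 0 := le_max_left b 0
        _ = Real.sqrt ((max b 0) ^ 2) := (Real.sqrt_sq (le_max_right b 0)).symm
        _ ≤ Real.sqrt a := Real.sqrt_le_sqrt ha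
      apply hsq.comp
      apply Real.tendsto_log_atTop.comp
      apply tendsto_atTop_mono (f := fun x : ℝ => x)
      · intro x
        nlinarith [le_max_left x (0:ℝ)]
      · exact tendsto_id
    have := h1.add h2
    rwa [add_zero] at this
  have hqle : ∀ t : ℝ, q t ≤ q 0 := by
    intro t
    rcases le_total 0 t with h | h
    · exact hqanti h
    · have : q t = q 0 := by
        simp only [hqdef, hSdef, max_eq_right h, max_self]
      exact le_of_eq this
  have hq0pos : 0 < q 0 := hqpos 0
  -- the envelope as a supremum of truncated affine functions
  set g : ℝ → ℝ → ℝ := fun t x => q t * max 0 (2 - x / max t 1) with hgdef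
  have hTpos : ∀ t : ℝ, (0:ℝ) < max t 1 := fun t => lt_of_lt_of_le one_pos (le_max_right t 1)
  have hgnonneg : ∀ t x : ℝ, 0 ≤ g t x := fun t x => mul_nonneg (hqpos t).le (le_max_left 0 _)
  have hgbdd : ∀ x : ℝ, BddAbove (Set.range fun t => g t x) := by
    intro x
    refine ⟨q 0 * (2 + |x|), ?_⟩
    rintro y ⟨t, rfl⟩
    have habs : |x / max t 1| ≤ |x| := by
      rw [abs_div, abs_of_pos (hTpos t)]
      exact div_le_self (abs_nonneg x) (le_max_right t 1)
    have h1 : max 0 (2 - x / max t 1) ≤ 2 + |x| := by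
      apply max_le
      · positivity
      · have := neg_abs_le (x / max t 1)
        linarith
    exact mul_le_mul (hqle t) h1 (le_max_left _ _) hq0pos.le
  set E₀ : ℝ → ℝ := fun x => ⨆ t : ℝ, g t x with hE₀def
  have hE₀ge : ∀ x : ℝ, q x ≤ E₀ x := by
    intro x
    have h1 : x / max x 1 ≤ 1 := (div_le_one (hTpos x)).mpr (le_max_left x 1)
    have h2 : (1:ℝ) ≤ max 0 (2 - x / max x 1) := le_max_of_le_right (by linarith)
    have h3 : q x ≤ g x x := by
      calc q x = q x * 1 := (mul_one _).symm
      _ ≤ q x * max 0 (2 - x / max x 1) := mul_le_mul_of_nonneg_left h2 (hqpos x).le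
    exact h3.trans (le_ciSup (hgbdd x) x)
  have hE₀pos : ∀ x : ℝ, 0 < E₀ x := fun x => (hqpos x).trans_le (hE₀ge x)
  have hE₀anti : Antitone E₀ := by
    intro x y hxy
    apply ciSup_le
    intro t
    refine le_trans ?_ (le_ciSup (hgbdd x) t)
    apply mul_le_mul_of_nonneg_left _ (hqpos t).le
    apply max_le_max le_rfl
    have : x / max t 1 ≤ y / max t 1 := (div_le_div_iff_of_pos_right (hTpos t)).mpr hxy
    linarith
  have hE₀convex : ConvexOn ℝ (Ici (0:ℝ)) E₀ := by
    refine ⟨convex_Ici 0, ?_⟩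
    intro x _ y _ a b ha hb hab
    simp only [smul_eq_mul]
    apply ciSup_le
    intro t
    have key : g t (a * x + b * y) ≤ a * g t x + b * g t y := by
      have e : 2 - (a * x + b * y) / max t 1
          = a * (2 - x / max t 1) + b * (2 - y / max t 1) := by
        have h1 : (a * x + b * y) / max t 1 = a * (x / max t 1) + b * (y / max t 1) := by
          ring
        rw [h1]
        linear_combination (-2:ℝ) * hab
      have hfac : max 0 (2 - (a * x + b * y) / max t 1)
          ≤ a * max 0 (2 - x / max t 1) + b * max 0 (2 - y / max t 1) := by
        apply max_le
        · positivity
        · rw [e]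
          have h2 := mul_le_mul_of_nonneg_left (le_max_right 0 (2 - x / max t 1)) ha
          have h3 := mul_le_mul_of_nonneg_left (le_max_right 0 (2 - y / max t 1)) hb
          linarith
      calc g t (a * x + b * y) ≤ q t * (a * max 0 (2 - x / max t 1) + b * max 0 (2 - y / max t 1)) :=
            mul_le_mul_of_nonneg_left hfac (hqpos t).le
      _ = a * g t x + b * g t y := by ring
    refine key.trans (add_le_add ?_ ?_)
    · exact mul_le_mul_of_nonneg_left (le_ciSup (hgbdd x) t) ha
    · exact mul_le_mul_of_nonneg_left (le_ciSup (hgbdd y) t) hb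
  have hE₀lim : Tendsto E₀ atTop (nhds 0) := by
    rw [Metric.tendsto_atTop]
    intro ε hε
    obtain ⟨T₀, hT₀⟩ := Metric.tendsto_atTop.mp hqlim (ε / 3) (by linarith)
    refine ⟨2 * max T₀ 1, fun x hx => ?_⟩
    have hxpos : (0:ℝ) < x := lt_of_lt_of_le (by positivity) hx
    have hE : E₀ x ≤ 2 * ε / 3 := by
      apply ciSup_le
      intro t
      rcases le_total t T₀ with h | h
      · have hTle : max t 1 ≤ max T₀ 1 := max_le_max h le_rfl
        have hx2 : 2 ≤ x / max t 1 := by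
          rw [le_div_iff₀ (hTpos t)]
          nlinarith
        have hz : max 0 (2 - x / max t 1) = 0 := max_eq_left (by linarith)
        show q t * max 0 (2 - x / max t 1) ≤ 2 * ε / 3
        rw [hz, mul_zero]
        positivity
      · have hqt : q t ≤ ε / 3 := by
          have := hT₀ t h
          rw [Real.dist_eq, sub_zero] at this
          exact le_of_lt (lt_of_abs_lt this)
        have hfac : max 0 (2 - x / max t 1) ≤ 2 := by
          apply max_le
          · norm_num
          · have : 0 ≤ x / max t 1 := div_nonneg hxpos.le (hTpos t).le
            linarith
        calc g t x ≤ (ε / 3) * 2 :=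
              mul_le_mul hqt hfac (le_max_left _ _) (by linarith)
        _ = 2 * ε / 3 := by ring
    rw [Real.dist_eq, sub_zero, abs_of_pos (hE₀pos x)]
    linarith
  have hE₀0pos : 0 < E₀ 0 := hE₀pos 0
  -- normalize
  refine ⟨fun x => E₀ x / E₀ 0, ?_, ?_, ?_, ?_, ?_, ?_, ?_⟩
  · have heq : (fun x => E₀ x / E₀ 0) = (E₀ 0)⁻¹ • E₀ := by
      funext x
      simp [div_eq_inv_mul, smul_eq_mul]
    rw [heq]
    exact hE₀convex.smul (by positivity)
  · intro x _ y _ hxy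
    exact (div_le_div_iff_of_pos_right hE₀0pos).mpr (hE₀anti hxy)
  · exact div_self hE₀0pos.ne'
  · intro x _
    exact div_pos (hE₀pos x) hE₀0pos
  · have := hE₀lim.div_const (E₀ 0)
    rwa [zero_div] at this
  · -- f / E tends to 0
    apply squeeze_zero' (g := fun x => E₀ 0 * Real.sqrt (f x))
    · filter_upwards [eventually_ge_atTop (0:ℝ)] with x hx
      exact div_nonneg (hpos x hx).le (div_pos (hE₀pos x) hE₀0pos).le
    · filter_upwards [eventually_ge_atTop (0:ℝ)] with x hx
      have hfx : 0 < f x := hpos x hx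
      have hsq : Real.sqrt (f x) ≤ E₀ x := by
        refine le_trans ?_ (hE₀ge x)
        refine le_trans ?_ (le_add_of_nonneg_right (by positivity))
        apply Real.sqrt_le_sqrt
        have := hSge x
        rwa [max_eq_left hx] at this
      have hsqpos : 0 < Real.sqrt (f x) := Real.sqrt_pos.mpr hfx
      calc f x / (E₀ x / E₀ 0) = f x * E₀ 0 / E₀ x := div_div_eq_mul_div _ _ _
      _ ≤ f x * E₀ 0 / Real.sqrt (f x) :=
          div_le_div_of_nonneg_left (by positivity) hsqpos hsq
      _ = E₀ 0 * (f x / Real.sqrt (f x)) := by ring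
      _ = E₀ 0 * Real.sqrt (f x) := by rw [Real.div_sqrt]
    · have h1 : Tendsto (fun x => Real.sqrt (f x)) atTop (nhds 0) := by
        have := hlim.sqrt
        rwa [Real.sqrt_zero] at this
      have := h1.const_mul (E₀ 0)
      rwa [mul_zero] at this
  · refine ⟨(E₀ 0)⁻¹, by positivity, fun x hx => ?_⟩
    set s := Real.sqrt (Real.log (2 + x)) with hs
    have hspos : 0 < s := Real.sqrt_pos.mpr (Real.log_pos (by linarith))
    have hE₀x : s⁻¹ ≤ E₀ x := by
      refine le_trans ?_ (hE₀ge x)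
      have hmax : max x 0 = x := max_eq_left hx
      simp only [hqdef, hmax, hs]
      exact le_add_of_nonneg_left (by positivity)
    rw [div_le_div_iff₀ hspos hE₀0pos]
    calc (E₀ 0)⁻¹ * E₀ 0 = 1 := inv_mul_cancel₀ hE₀0pos.ne'
    _ = s⁻¹ * s := (inv_mul_cancel₀ hspos.ne').symm
    _ ≤ E₀ x * s := mul_le_mul_of_nonneg_right hE₀x hspos.le
end

section
/- The modified Bessel function K₀ of the second kind satisfies K₀(t) < −ln(t/2) for all t ∈ (0,1). -/
open MeasureTheory

/-- The modified Bessel function of the second kind of order `0`,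
via the integral representation `K₀(x) = ∫₀^∞ e^{−x cosh t} dt`. -/
noncomputable def besselK0 (x : ℝ) : ℝ :=
  ∫ t in Set.Ioi (0 : ℝ), Real.exp (-x * Real.cosh t)

lemma exp_neg_le_quad {s : ℝ} (hs : 0 ≤ s) : Real.exp (-s) ≤ 1 - s + s ^ 2 / 2 := by
  have h1 : 1 + s + s ^ 2 / 2 ≤ Real.exp s := by
    have h := Real.sum_le_exp_of_nonneg hs 3
    have : ∑ i ∈ Finset.range 3, s ^ i / (Nat.factorial i) = 1 + s + s ^ 2 / 2 := by
      norm_num [Finset.sum_range_succ, Nat.factorial]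
    linarith [this ▸ h]
  have h2 : (0:ℝ) < 1 + s + s ^ 2 / 2 := by positivity
  rw [Real.exp_neg]
  have h3 : (Real.exp s)⁻¹ ≤ (1 + s + s ^ 2 / 2)⁻¹ := by
    apply inv_anti₀ h2 h1
  refine h3.trans ?_
  rw [inv_eq_one_div, div_le_iff₀ h2]
  nlinarith [sq_nonneg (s ^ 2)]

lemma integrable_aux {c : ℝ} (a : ℝ) (hc : 0 < c) :
    IntegrableOn (fun u => Real.exp (-(c * Real.exp u))) (Set.Ioi a) := by
  have hg : IntegrableOn (fun u => Real.exp (-c) * Real.exp (-c * u)) (Set.Ioi a) :=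
    (exp_neg_integrableOn_Ioi a hc).const_mul _
  refine hg.mono' ?_ ?_
  · exact (Real.continuous_exp.comp
      ((continuous_const.mul Real.continuous_exp).neg)).aestronglyMeasurable
  · filter_upwards with u
    rw [Real.norm_eq_abs, abs_of_pos (Real.exp_pos _), ← Real.exp_add]
    apply Real.exp_le_exp.2
    nlinarith [Real.add_one_le_exp u, hc.le]

lemma integral_exp_neg_mul_Ioi {c : ℝ} (a : ℝ) (hc : 0 < c) :
    ∫ u in Set.Ioi a, Real.exp (-(c * u)) = Real.exp (-(c * a)) / c := by
  have hder : ∀ x ∈ Set.Ici a,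
      HasDerivAt (fun u : ℝ => -Real.exp (-(c * u)) / c) (Real.exp (-(c * x))) x := by
    intro x _
    have h : HasDerivAt (fun u : ℝ => -(c * u)) (-c) x := by
      exact (((hasDerivAt_id x).const_mul c).neg).congr_deriv (by ring)
    have : HasDerivAt (fun u : ℝ => -Real.exp (-(c * u)) / c)
        (-(Real.exp (-(c * x)) * -c) / c) x := (h.exp.neg).div_const c
    convert this using 1
    field_simp
  have hint : IntegrableOn (fun u => Real.exp (-(c * u))) (Set.Ioi a) := by
    have := exp_neg_integrableOn_Ioi a hc
    exact this.congr_fun (fun x _ => by dsimp only; rw [neg_mul]) measurableSet_Ioi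
  have htend : Filter.Tendsto (fun u : ℝ => -Real.exp (-(c * u)) / c)
      Filter.atTop (nhds 0) := by
    have h1 : Filter.Tendsto (fun u : ℝ => Real.exp (-(c * u))) Filter.atTop (nhds 0) := by
      exact Real.tendsto_exp_neg_atTop_nhds_zero.comp
        (Filter.Tendsto.const_mul_atTop hc Filter.tendsto_id)
    simpa using (h1.neg).div_const c
  have := integral_Ioi_of_hasDerivAt_of_tendsto' hder hint htend
  rw [this]
  ring

/-- `K₀(t) < −ln(t/2)` for all `t ∈ (0,1)`. -/
theorem besselK0_lt_neg_log (t : ℝ) (ht : t ∈ Set.Ioo (0 : ℝ) 1) :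
    besselK0 t < -Real.log (t / 2) := by
  obtain ⟨ht0, ht1⟩ := ht
  set y : ℝ := t / 2 with hy
  have hy0 : 0 < y := by positivity
  have hy2 : y < 1 / 2 := by rw [hy]; linarith
  set b : ℝ := -Real.log y with hb
  have hb0 : 0 < b := by
    have := Real.log_neg hy0 (by linarith)
    simp only [hb]; linarith
  have hyb : Real.exp b = y⁻¹ := by
    rw [hb, Real.exp_neg, Real.exp_log hy0]
  have key : ∀ u : ℝ, y * Real.exp u = Real.exp (u - b) := by
    intro u
    rw [Real.exp_sub, hyb, div_eq_mul_inv, inv_inv, mul_comm]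
  -- integrability of the comparison function
  have hIg : IntegrableOn (fun u => Real.exp (-(y * Real.exp u))) (Set.Ioi (0:ℝ)) :=
    integrable_aux 0 hy0
  have hcontg : Continuous (fun u => Real.exp (-(y * Real.exp u))) :=
    Real.continuous_exp.comp ((continuous_const.mul Real.continuous_exp).neg)
  -- Step A : bound by the comparison integral
  have stepA : besselK0 t ≤ ∫ u in Set.Ioi (0:ℝ), Real.exp (-(y * Real.exp u)) := by
    unfold besselK0
    have hIf : IntegrableOn (fun u => Real.exp (-t * Real.cosh u)) (Set.Ioi (0:ℝ)) := by
      refine hIg.mono' ?_ ?_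
      · exact (Real.continuous_exp.comp
          ((continuous_const.mul Real.continuous_cosh))).aestronglyMeasurable
      · filter_upwards with u
        rw [Real.norm_eq_abs, abs_of_pos (Real.exp_pos _)]
        apply Real.exp_le_exp.2
        rw [Real.cosh_eq, hy]
        nlinarith [Real.exp_pos (-u), Real.exp_pos u, ht0.le]
    refine setIntegral_mono_on hIf hIg measurableSet_Ioi ?_
    intro u _
    apply Real.exp_le_exp.2
    rw [Real.cosh_eq, hy]
    nlinarith [Real.exp_pos (-u), Real.exp_pos u, ht0.le]
  -- split the integral at b and b+1
  have hsplit : ∫ u in Set.Ioi (0:ℝ), Real.exp (-(y * Real.exp u))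
      = (∫ u in Set.Ioc (0:ℝ) b, Real.exp (-(y * Real.exp u)))
        + ((∫ u in Set.Ioc b (b+1), Real.exp (-(y * Real.exp u)))
          + ∫ u in Set.Ioi (b+1), Real.exp (-(y * Real.exp u))) := by
    rw [← setIntegral_union Set.Ioc_disjoint_Ioi_same measurableSet_Ioi
      (hcontg.integrableOn_Ioc) (hIg.mono_set (Set.Ioi_subset_Ioi (by linarith))),
      Set.Ioc_union_Ioi_eq_Ioi (by linarith : b ≤ b + 1),
      ← setIntegral_union Set.Ioc_disjoint_Ioi_same measurableSet_Ioi
      (hcontg.integrableOn_Ioc) (hIg.mono_set (Set.Ioi_subset_Ioi hb0.le)),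
      Set.Ioc_union_Ioi_eq_Ioi hb0.le]
  -- Part 1 : integral over (0, b]
  have part1 : ∫ u in Set.Ioc (0:ℝ) b, Real.exp (-(y * Real.exp u))
      ≤ b - 3/4 + y - y^2/4 := by
    rw [← intervalIntegral.integral_of_le hb0.le]
    have hle : (∫ u in (0:ℝ)..b, Real.exp (-(y * Real.exp u)))
        ≤ ∫ u in (0:ℝ)..b, (1 - y * Real.exp u + (y * Real.exp u)^2 / 2) := by
      refine intervalIntegral.integral_mono_on hb0.le
        (hcontg.intervalIntegrable _ _) ?_ ?_
      · exact (by fun_prop : Continuous fun u : ℝ =>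
          1 - y * Real.exp u + (y * Real.exp u)^2 / 2).intervalIntegrable _ _
      · intro u _
        exact exp_neg_le_quad (by positivity)
    refine hle.trans ?_
    have hFTC : (∫ u in (0:ℝ)..b, (1 - y * Real.exp u + (y * Real.exp u)^2 / 2))
        = (b - y * Real.exp b + y^2 * (Real.exp b)^2 / 4)
          - (0 - y * Real.exp 0 + y^2 * (Real.exp 0)^2 / 4) := by
      apply intervalIntegral.integral_eq_sub_of_hasDerivAt
        (f := fun u => u - y * Real.exp u + y^2 * (Real.exp u)^2 / 4)
      · intro u _
        have h1 : HasDerivAt (fun u : ℝ => u) 1 u := hasDerivAt_id u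
        have h2 : HasDerivAt Real.exp (Real.exp u) u := Real.hasDerivAt_exp u
        have h3 := h2.pow 2
        have : HasDerivAt (fun u => u - y * Real.exp u + y^2 * (Real.exp u)^2 / 4)
            (1 - y * Real.exp u + y ^ 2 * (((2:ℕ):ℝ) * Real.exp u ^ 1 * Real.exp u) / 4) u :=
          ((h1.sub (h2.const_mul y)).add ((h3.const_mul (y^2)).div_const 4))
        exact this.congr_deriv (by push_cast; ring)
      · exact (by fun_prop : Continuous fun u : ℝ =>
          1 - y * Real.exp u + (y * Real.exp u)^2 / 2).intervalIntegrable _ _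
    rw [hFTC, hyb, Real.exp_zero]
    have hyne : y ≠ 0 := ne_of_gt hy0
    field_simp
    ring_nf
    nlinarith [hy0]
  -- Part 2a : integral over (b, b+1]
  have part2a : ∫ u in Set.Ioc b (b+1), Real.exp (-(y * Real.exp u))
      ≤ Real.exp (-1) - Real.exp (-2) := by
    rw [← intervalIntegral.integral_of_le (by linarith : b ≤ b + 1)]
    have hle : (∫ u in b..(b+1), Real.exp (-(y * Real.exp u)))
        ≤ ∫ u in b..(b+1), Real.exp (b - 1 - u) := by
      refine intervalIntegral.integral_mono_on (by linarith)
        (hcontg.intervalIntegrable _ _) ?_ ?_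
      · exact (by fun_prop : Continuous fun u : ℝ =>
          Real.exp (b - 1 - u)).intervalIntegrable _ _
      · intro u _
        apply Real.exp_le_exp.2
        rw [key u]
        nlinarith [Real.add_one_le_exp (u - b)]
    refine hle.trans ?_
    have hFTC : (∫ u in b..(b+1), Real.exp (b - 1 - u))
        = (-Real.exp (b - 1 - (b+1))) - (-Real.exp (b - 1 - b)) := by
      apply intervalIntegral.integral_eq_sub_of_hasDerivAt
        (f := fun u => -Real.exp (b - 1 - u))
      · intro u _
        have h : HasDerivAt (fun u : ℝ => b - 1 - u) (-1) u := by
          simpa using (hasDerivAt_id u).const_sub (b - 1)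
        have : HasDerivAt (fun u => -Real.exp (b - 1 - u)) (-(Real.exp (b - 1 - u) * -1)) u :=
          h.exp.neg
        exact this.congr_deriv (by ring)
      · exact (by fun_prop : Continuous fun u : ℝ =>
          Real.exp (b - 1 - u)).intervalIntegrable _ _
    rw [hFTC]
    have e1 : b - 1 - (b+1) = (-2 : ℝ) := by ring
    have e2 : b - 1 - b = (-1 : ℝ) := by ring
    rw [e1, e2]
    ring_nf
    linarith [Real.exp_pos (-2 : ℝ)]
  -- Part 2b : integral over (b+1, ∞)
  have part2b : ∫ u in Set.Ioi (b+1), Real.exp (-(y * Real.exp u))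
      ≤ Real.exp (-(Real.exp 1) - 1) := by
    have he1 : (0:ℝ) < Real.exp 1 := Real.exp_pos 1
    have hmajInt : IntegrableOn
        (fun u => Real.exp (Real.exp 1 * b) * Real.exp (-(Real.exp 1 * u)))
        (Set.Ioi (b+1)) := by
      have base : IntegrableOn (fun u => Real.exp (-(Real.exp 1 * u)))
          (Set.Ioi (b+1)) :=
        (exp_neg_integrableOn_Ioi (b+1) he1).congr_fun
          (fun x _ => by dsimp only; rw [neg_mul]) measurableSet_Ioi
      exact base.const_mul _
    have hmono : ∫ u in Set.Ioi (b+1), Real.exp (-(y * Real.exp u))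
        ≤ ∫ u in Set.Ioi (b+1),
            Real.exp (Real.exp 1 * b) * Real.exp (-(Real.exp 1 * u)) := by
      refine setIntegral_mono_on
        (hIg.mono_set (Set.Ioi_subset_Ioi (by linarith))) hmajInt
        measurableSet_Ioi ?_
      intro u hu
      rw [← Real.exp_add]
      apply Real.exp_le_exp.2
      rw [key u]
      have h1 : Real.exp (u - b) = Real.exp 1 * Real.exp (u - b - 1) := by
        rw [← Real.exp_add]; congr 1; ring
      have h2 := Real.add_one_le_exp (u - b - 1)
      nlinarith [he1]
    refine hmono.trans ?_
    rw [integral_const_mul, integral_exp_neg_mul_Ioi (b+1) he1]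
    rw [div_eq_mul_inv, ← Real.exp_neg, ← mul_assoc, ← Real.exp_add, ← Real.exp_add]
    apply le_of_eq
    congr 1
    ring
  -- numeric bound
  have hnum : Real.exp (-1) - Real.exp (-2) + Real.exp (-(Real.exp 1) - 1)
      < 3/4 - y + y^2/4 := by
    have hlt := Real.exp_one_lt_d9
    have hgt := Real.exp_one_gt_d9
    have hE : (0:ℝ) < Real.exp 1 := Real.exp_pos 1
    have h1 : Real.exp (-1 : ℝ) ≤ 0.368 := by
      rw [Real.exp_neg]
      rw [inv_le_comm₀ (by positivity) (by norm_num)]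
      have : (0.368 : ℝ)⁻¹ ≤ 2.7182818283 := by norm_num
      linarith
    have h2 : (0.135 : ℝ) ≤ Real.exp (-2 : ℝ) := by
      have : Real.exp (2:ℝ) = Real.exp 1 * Real.exp 1 := by
        rw [← Real.exp_add]; norm_num
      rw [Real.exp_neg]
      rw [le_inv_comm₀ (by norm_num) (by positivity)]
      rw [this]
      nlinarith
    have h3 : Real.exp (-(Real.exp 1) - 1) ≤ 0.051 := by
      have hle3 : Real.exp (-(Real.exp 1) - 1) ≤ Real.exp (-3 : ℝ) :=
        Real.exp_le_exp.2 (by linarith)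
      refine hle3.trans ?_
      have : Real.exp (3:ℝ) = Real.exp 1 * Real.exp 1 * Real.exp 1 := by
        rw [← Real.exp_add, ← Real.exp_add]; norm_num
      rw [Real.exp_neg]
      rw [inv_le_comm₀ (by positivity) (by norm_num)]
      rw [this]
      nlinarith
    nlinarith [sq_nonneg (y - 1/2)]
  -- put everything together
  have h := stepA
  rw [hsplit] at h
  show besselK0 t < b
  linarith [part1, part2a, part2b, hnum]
end

section
/- Let d ≥ 1 and let f : [0,1]^d → ℝ^{d+1} be Lipschitz with Lipschitz constant C_lip(f). Then for any r > 0, the (d+1)-dimensional Lebesgue measure of the open r-neighborhood of the image f([0,1]^d) satisfies |B_r(f([0,1]^d))| ≤ (16√d)^d (C_lip(f)^d + 1)(r + r^{d+1}). -/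
open MeasureTheory ENNReal

private lemma coord_le_dist' {n : ℕ} (y z : EuclideanSpace ℝ (Fin n)) (i : Fin n) :
    |y i - z i| ≤ dist y z := by
  rw [EuclideanSpace.dist_eq, ← Real.sqrt_sq_eq_abs]
  apply Real.sqrt_le_sqrt
  have := Finset.single_le_sum (f := fun j => dist (y j) (z j) ^ 2)
    (fun j _ => sq_nonneg _) (Finset.mem_univ i)
  simpa [Real.dist_eq] using this

private lemma volume_box_le' {n : ℕ} (z : EuclideanSpace ℝ (Fin n)) (R : ℝ) (hR : 0 ≤ R) :
    volume {y : EuclideanSpace ℝ (Fin n) | ∀ i, |y i - z i| ≤ R}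
      ≤ ENNReal.ofReal ((2 * R) ^ n) := by
  have hset : {y : EuclideanSpace ℝ (Fin n) | ∀ i, |y i - z i| ≤ R}
      = (MeasurableEquiv.toLp 2 (Fin n → ℝ)).symm ⁻¹'
        (Set.univ.pi fun i => Set.Icc (z i - R) (z i + R)) := by
    ext y
    simp only [Set.mem_setOf_eq, Set.mem_preimage, Set.mem_pi, Set.mem_univ,
      forall_true_left, Set.mem_Icc, MeasurableEquiv.coe_toLp_symm,
      MeasurableEquiv.toLp_symm_apply]
    refine forall_congr' fun i => ?_
    rw [abs_le]
    constructor <;> intro h <;> constructor <;> linarith [h.1, h.2]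
  rw [hset, (EuclideanSpace.volume_preserving_symm_measurableEquiv_toLp (Fin n)).measure_preimage
    ((MeasurableSet.univ_pi fun i => measurableSet_Icc).nullMeasurableSet),
    volume_pi_pi]
  have : ∀ i : Fin n, volume (Set.Icc (z i - R) (z i + R)) = ENNReal.ofReal (2*R) := by
    intro i
    rw [Real.volume_Icc, show z i + R - (z i - R) = 2*R by ring]
  rw [Finset.prod_congr rfl (fun i _ => this i), Finset.prod_const, Finset.card_univ,
    Fintype.card_fin, ← ENNReal.ofReal_pow (by linarith)]

private lemma key' (d N : ℕ) (hN : 0 < N) (C : NNReal)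
    (f : EuclideanSpace ℝ (Fin d) → EuclideanSpace ℝ (Fin (d+1)))
    (hf : LipschitzOnWith C f {x : EuclideanSpace ℝ (Fin d) | ∀ i, x i ∈ Set.Icc (0:ℝ) 1})
    (r R : ℝ) (hr : 0 < r)
    (hR : r + (C : ℝ) * Real.sqrt d / (2*N) ≤ R) :
    volume (Metric.thickening r
        (f '' {x : EuclideanSpace ℝ (Fin d) | ∀ i, x i ∈ Set.Icc (0:ℝ) 1}))
      ≤ (N : ℝ≥0∞)^d * ENNReal.ofReal ((2*R)^(d+1)) := by
  set Q : Set (EuclideanSpace ℝ (Fin d)) := {x | ∀ i, x i ∈ Set.Icc (0:ℝ) 1} with hQ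
  have hN' : (0:ℝ) < N := by exact_mod_cast hN
  -- centers of subcubes
  set c : (Fin d → Fin N) → EuclideanSpace ℝ (Fin d) :=
    fun k => (WithLp.equiv 2 (Fin d → ℝ)).symm (fun i => ((k i : ℝ) + 1/2)/N) with hc
  have hck : ∀ k i, c k i = ((k i : ℝ) + 1/2)/N := fun k i => rfl
  have hcQ : ∀ k, c k ∈ Q := by
    intro k i
    rw [hck]
    constructor
    · positivity
    · rw [div_le_one hN']
      have : (k i : ℝ) ≤ (N : ℝ) - 1 := by
        have := k i |>.isLt
        have : (k i : ℝ) + 1 ≤ N := by exact_mod_cast this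
        linarith
      linarith
  -- cover
  have hcover : Metric.thickening r (f '' Q) ⊆
      ⋃ (k : Fin d → Fin N), {y : EuclideanSpace ℝ (Fin (d+1)) | ∀ i, |y i - f (c k) i| ≤ R} := by
    intro y hy
    rw [Metric.mem_thickening_iff] at hy
    obtain ⟨z, ⟨x, hxQ, rfl⟩, hyz⟩ := hy
    -- choose the subcube index
    set k : Fin d → Fin N := fun i =>
      ⟨min ⌊x i * N⌋₊ (N-1), lt_of_le_of_lt (min_le_right _ _) (Nat.sub_lt hN one_pos)⟩ with hk
    have hxc : ∀ i, |x i - c k i| ≤ 1/(2*N) := by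
      intro i
      have hx0 : 0 ≤ x i := (hxQ i).1
      have hx1 : x i ≤ 1 := (hxQ i).2
      set m : ℕ := min ⌊x i * N⌋₊ (N-1) with hm
      have h1 : (m : ℝ) ≤ x i * N := by
        calc (m : ℝ) ≤ (⌊x i * N⌋₊ : ℝ) := by exact_mod_cast min_le_left _ _
          _ ≤ x i * N := Nat.floor_le (by positivity)
      have h2 : x i * N ≤ (m : ℝ) + 1 := by
        rcases le_or_gt ⌊x i * N⌋₊ (N-1) with h | h
        · have hme : m = ⌊x i * N⌋₊ := min_eq_left h
          rw [hme]
          exact (Nat.lt_floor_add_one (x i * N)).le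
        · have hme : m = N - 1 := min_eq_right h.le
          have : ((N:ℕ) - 1 : ℕ) + 1 = N := Nat.succ_pred_eq_of_pos hN
          have hcast : (m : ℝ) + 1 = N := by
            rw [hme]; exact_mod_cast congrArg (Nat.cast (R := ℝ)) this
          rw [hcast]
          nlinarith
      have hcki : c k i = ((m : ℝ) + 1/2)/N := hck k i
      rw [hcki, abs_le]
      have e1 : ((m:ℝ) + 1/2)/N = (m:ℝ)/N + 1/(2*N) := by field_simp
      have e2 : (m:ℝ)/N ≤ x i := by rw [div_le_iff₀ hN']; exact h1
      have e3 : x i ≤ ((m:ℝ)+1)/N := by rw [le_div_iff₀ hN']; exact h2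
      have e4 : ((m:ℝ)+1)/N = (m:ℝ)/N + 1/(2*N) + 1/(2*N) := by field_simp; ring
      constructor <;> linarith
    have hdist : dist x (c k) ≤ Real.sqrt d / (2*N) := by
      rw [EuclideanSpace.dist_eq]
      have hsum : ∑ i, dist (x i) (c k i) ^ 2 ≤ (d : ℝ) * (1/(2*N))^2 := by
        calc ∑ i, dist (x i) (c k i) ^ 2 ≤ ∑ _i : Fin d, ((1:ℝ)/(2*(N:ℝ)))^2 := by
              apply Finset.sum_le_sum
              intro i _
              have h := hxc i
              rw [Real.dist_eq]
              nlinarith [abs_nonneg (x i - c k i)]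
          _ = (d : ℝ) * (1/(2*(N:ℝ)))^2 := by
              rw [Finset.sum_const, Finset.card_univ, Fintype.card_fin, nsmul_eq_mul]
      calc Real.sqrt (∑ i, dist (x i) (c k i) ^ 2)
          ≤ Real.sqrt ((d : ℝ) * (1/(2*N))^2) := Real.sqrt_le_sqrt hsum
        _ = Real.sqrt d * (1/(2*N)) := by
            rw [Real.sqrt_mul (by positivity), Real.sqrt_sq (by positivity)]
        _ = Real.sqrt d / (2*N) := by ring
    have hfd : dist (f x) (f (c k)) ≤ (C:ℝ) * (Real.sqrt d / (2*N)) := by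
      calc dist (f x) (f (c k)) ≤ (C:ℝ) * dist x (c k) := hf.dist_le_mul x hxQ (c k) (hcQ k)
        _ ≤ (C:ℝ) * (Real.sqrt d / (2*N)) := by
            apply mul_le_mul_of_nonneg_left hdist C.coe_nonneg
    have hyfck : dist y (f (c k)) ≤ R := by
      calc dist y (f (c k)) ≤ dist y (f x) + dist (f x) (f (c k)) := dist_triangle _ _ _
        _ ≤ r + (C:ℝ) * Real.sqrt d / (2*N) := by
            have hfd' : dist (f x) (f (c k)) ≤ (C:ℝ) * Real.sqrt d / (2*N) := by
              rw [mul_div_assoc]; exact hfd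
            linarith
        _ ≤ R := hR
    refine Set.mem_iUnion.mpr ⟨k, fun i => ?_⟩
    exact (coord_le_dist' y (f (c k)) i).trans hyfck
  calc volume (Metric.thickening r (f '' Q))
      ≤ volume (⋃ (k : Fin d → Fin N),
          {y : EuclideanSpace ℝ (Fin (d+1)) | ∀ i, |y i - f (c k) i| ≤ R}) :=
        measure_mono hcover
    _ ≤ ∑ k : Fin d → Fin N, volume
          {y : EuclideanSpace ℝ (Fin (d+1)) | ∀ i, |y i - f (c k) i| ≤ R} :=
        measure_iUnion_fintype_le _ _
    _ ≤ ∑ _k : Fin d → Fin N, ENNReal.ofReal ((2*R)^(d+1)) := by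
        apply Finset.sum_le_sum
        intro k _
        apply volume_box_le'
        have : (0:ℝ) ≤ (C : ℝ) * Real.sqrt d / (2*N) := by positivity
        linarith
    _ = (N : ℝ≥0∞)^d * ENNReal.ofReal ((2*R)^(d+1)) := by
        rw [Finset.sum_const, Finset.card_univ, Fintype.card_fun, Fintype.card_fin,
          Fintype.card_fin, nsmul_eq_mul, Nat.cast_pow]

private lemma real_ineq1 (d : ℕ) (hd : 1 ≤ d) (C : NNReal) (r : ℝ) (hr : 0 < r) :
    (2*(2*r))^(d+1) ≤ (16 * Real.sqrt d) ^ d * ((C : ℝ) ^ d + 1) * (r + r ^ (d + 1)) := by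
  have hs : (1:ℝ) ≤ Real.sqrt d := by
    rw [show (1:ℝ) = Real.sqrt 1 by rw [Real.sqrt_one]]
    exact Real.sqrt_le_sqrt (by exact_mod_cast hd)
  have h4 : (4:ℝ)^(d+1) ≤ 16^d := by
    calc (4:ℝ)^(d+1) ≤ 4^(2*d) := by
          apply pow_le_pow_right₀ (by norm_num) (by omega)
      _ = 16^d := by rw [pow_mul]; norm_num
  have hC : (0:ℝ) ≤ (C:ℝ) := C.coe_nonneg
  calc (2*(2*r))^(d+1) = 4^(d+1) * r^(d+1) := by
        rw [show 2*(2*r) = 4*r by ring, mul_pow]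
    _ ≤ 16^d * r^(d+1) := by
        apply mul_le_mul_of_nonneg_right h4 (by positivity)
    _ ≤ (16 * Real.sqrt d) ^ d * (((C : ℝ) ^ d + 1) * (r + r ^ (d + 1))) := by
        apply mul_le_mul
        · apply pow_le_pow_left₀ (by norm_num) (by nlinarith)
        · nlinarith [pow_nonneg hC d, pow_pos hr (d+1)]
        · positivity
        · positivity
    _ = (16 * Real.sqrt d) ^ d * ((C : ℝ) ^ d + 1) * (r + r ^ (d + 1)) := by ring

private lemma real_ineq2 (d : ℕ) (hd : 1 ≤ d) (C : NNReal) (r : ℝ) (hr : 0 < r)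
    (N : ℕ) (hNle : (N:ℝ) ≤ (C:ℝ) * Real.sqrt d / r) :
    (N:ℝ)^d * (2*(2*r))^(d+1)
      ≤ (16 * Real.sqrt d) ^ d * ((C : ℝ) ^ d + 1) * (r + r ^ (d + 1)) := by
  have hC : (0:ℝ) ≤ (C:ℝ) := C.coe_nonneg
  have hs : (0:ℝ) ≤ Real.sqrt d := Real.sqrt_nonneg _
  have h4 : (4:ℝ)^(d+1) ≤ 16^d := by
    calc (4:ℝ)^(d+1) ≤ 4^(2*d) := by
          apply pow_le_pow_right₀ (by norm_num) (by omega)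
      _ = 16^d := by rw [pow_mul]; norm_num
  calc (N:ℝ)^d * (2*(2*r))^(d+1)
      ≤ ((C:ℝ) * Real.sqrt d / r)^d * (2*(2*r))^(d+1) := by
        apply mul_le_mul_of_nonneg_right _ (by positivity)
        exact pow_le_pow_left₀ (by positivity) hNle d
    _ = 4^(d+1) * (((C:ℝ) * Real.sqrt d)^d * r) := by
        rw [div_pow, show 2*(2*r) = 4*r by ring, mul_pow, pow_succ]
        field_simp
        ring
    _ ≤ 16^d * (((C:ℝ) * Real.sqrt d)^d * r) := by
        apply mul_le_mul_of_nonneg_right h4 (by positivity)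
    _ = (16 * Real.sqrt d) ^ d * ((C:ℝ)^d * r) := by
        rw [mul_pow, mul_pow]; ring
    _ ≤ (16 * Real.sqrt d) ^ d * (((C : ℝ) ^ d + 1) * (r + r ^ (d + 1))) := by
        apply mul_le_mul_of_nonneg_left _ (by positivity)
        nlinarith [pow_nonneg hC d, pow_pos hr (d+1)]
    _ = (16 * Real.sqrt d) ^ d * ((C : ℝ) ^ d + 1) * (r + r ^ (d + 1)) := by ring

/-- Volume bound for the `r`-neighborhood of the image of the unit cube under a
Lipschitz map `f : [0,1]^d → ℝ^{d+1}`. -/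
theorem volume_thickening_lipschitz_image (d : ℕ) (hd : 1 ≤ d) (C : NNReal)
    (f : EuclideanSpace ℝ (Fin d) → EuclideanSpace ℝ (Fin (d + 1)))
    (hf : LipschitzOnWith C f {x : EuclideanSpace ℝ (Fin d) | ∀ i, x i ∈ Set.Icc (0:ℝ) 1})
    (r : ℝ) (hr : 0 < r) :
    volume (Metric.thickening r
        (f '' {x : EuclideanSpace ℝ (Fin d) | ∀ i, x i ∈ Set.Icc (0:ℝ) 1}))
      ≤ ENNReal.ofReal
          ((16 * Real.sqrt d) ^ d * ((C : ℝ) ^ d + 1) * (r + r ^ (d + 1))) := by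
  have hC : (0:ℝ) ≤ (C:ℝ) := C.coe_nonneg
  have hs : (0:ℝ) ≤ Real.sqrt d := Real.sqrt_nonneg _
  rcases le_or_gt ((C:ℝ) * Real.sqrt d) r with h | h
  · -- one cube suffices
    have hkey := key' d 1 one_pos C f hf r (2*r) hr (by
      push_cast
      have : (0:ℝ) ≤ (C:ℝ) * Real.sqrt d := by positivity
      have h2 : (C:ℝ) * Real.sqrt d / (2*1) ≤ r / 2 := by
        rw [div_le_div_iff₀ (by norm_num) (by norm_num)]
        nlinarith
      linarith)
    refine hkey.trans ?_
    rw [Nat.cast_one, one_pow, one_mul]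
    exact ENNReal.ofReal_le_ofReal (real_ineq1 d hd C r hr)
  · -- subdivide
    set a : ℝ := (C:ℝ) * Real.sqrt d / (2*r) with ha
    have ha0 : 0 < a := by
      apply div_pos _ (by linarith)
      linarith
    set N : ℕ := ⌈a⌉₊ with hNdef
    have hN : 0 < N := Nat.ceil_pos.mpr ha0
    have hN' : (0:ℝ) < N := by exact_mod_cast hN
    have haN : a ≤ N := Nat.le_ceil a
    have hkey := key' d N hN C f hf r (2*r) hr (by
      have h1 : (C:ℝ) * Real.sqrt d ≤ N * (2*r) := by
        have := (div_le_iff₀ (by linarith : (0:ℝ) < 2*r)).mp haN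
        linarith
      have h2 : (C:ℝ) * Real.sqrt d / (2*N) ≤ r := by
        rw [div_le_iff₀ (by positivity)]
        nlinarith
      linarith)
    have hNle : (N:ℝ) ≤ (C:ℝ) * Real.sqrt d / r := by
      have h2a : 2*a = (C:ℝ) * Real.sqrt d / r := by
        rw [ha]; field_simp
      rcases le_or_gt a 1 with h1 | h1
      · have : N ≤ 1 := Nat.ceil_le.mpr (by exact_mod_cast h1)
        have hN1 : (N:ℝ) ≤ 1 := by exact_mod_cast this
        have : (1:ℝ)/2 < a := by
          rw [ha, lt_div_iff₀ (by linarith : (0:ℝ) < 2*r)]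
          linarith
        have : (1:ℝ) < 2*a := by linarith
        linarith [h2a ▸ this]
      · have : (N:ℝ) < a + 1 := Nat.ceil_lt_add_one ha0.le
        have : (N:ℝ) ≤ 2*a := by linarith
        linarith [h2a ▸ this]
    refine hkey.trans ?_
    have hcast : (N : ENNReal)^d = ENNReal.ofReal ((N:ℝ)^d) := by
      rw [ENNReal.ofReal_pow (by positivity), ENNReal.ofReal_natCast]
    rw [hcast, ← ENNReal.ofReal_mul (by positivity)]
    exact ENNReal.ofReal_le_ofReal (real_ineq2 d hd C r hr N hNle)
end

section
/- Let I₁ = (s₁, s₁+ℓ₁) and I₂ ⊂ (s₁+ℓ₁+d, ∞) be intervals with ℓ₁, d > 0, and let k : ℝ → ℝ satisfy |k(z)| ≤ C/(1+|z|). Then ∫_{I₁} ∫_{I₂} k(x−y)² dy dx ≤ C² ln((1 + d + ℓ₁)/(1 + d)). -/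
open MeasureTheory

lemma aux_ioi_integral (c a x : ℝ) (hc : 0 ≤ c) (hx : x < a) :
    IntegrableOn (fun y => c / (1 + (y - x)) ^ 2) (Set.Ioi a) ∧
    ∫ y in Set.Ioi a, c / (1 + (y - x)) ^ 2 = c / (1 + (a - x)) := by
  set g : ℝ → ℝ := fun y => -c * (1 + (y - x))⁻¹ with hg
  have hderiv : ∀ y ∈ Set.Ici a, HasDerivAt g (c / (1 + (y - x)) ^ 2) y := by
    intro y hy
    have hpos : 0 < 1 + (y - x) := by
      have : x < y := lt_of_lt_of_le hx hy
      linarith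
    have h1 : HasDerivAt (fun y : ℝ => 1 + (y - x)) 1 y := by
      simpa using ((hasDerivAt_id y).sub_const x).const_add 1
    have h2 := (h1.inv hpos.ne').const_mul (-c)
    exact h2.congr_deriv (by ring)
  have hnonneg : ∀ y ∈ Set.Ioi a, 0 ≤ c / (1 + (y - x)) ^ 2 :=
    fun y _ => div_nonneg hc (sq_nonneg _)
  have htend : Filter.Tendsto g Filter.atTop (nhds 0) := by
    have h1 : Filter.Tendsto (fun y : ℝ => 1 + (y - x)) Filter.atTop Filter.atTop := by
      apply Filter.tendsto_atTop_add_const_left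
      simpa only [sub_eq_add_neg, id_eq] using Filter.tendsto_atTop_add_const_right Filter.atTop (-x) Filter.tendsto_id
    have h2 : Filter.Tendsto (fun y : ℝ => (1 + (y - x))⁻¹) Filter.atTop (nhds 0) :=
      h1.inv_tendsto_atTop
    have := h2.const_mul (-c)
    simpa [hg, neg_mul] using this
  refine ⟨integrableOn_Ioi_deriv_of_nonneg' hderiv hnonneg htend, ?_⟩
  rw [integral_Ioi_of_hasDerivAt_of_nonneg' hderiv hnonneg htend]
  have hpos : 0 < 1 + (a - x) := by linarith
  field_simp [hg]
  show (0 - (-c * (1 + (a - x))⁻¹)) * (1 + (a - x)) = c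
  simp only [zero_sub, neg_mul, neg_neg]
  rw [mul_assoc, inv_mul_cancel₀ hpos.ne', mul_one]

/-- Cross-term Hilbert–Schmidt bound: for an interval `I₁ = (s₁, s₁+ℓ₁)` and a set
`I₂ ⊂ (s₁+ℓ₁+d, ∞)`, and a kernel `k` with `|k(z)| ≤ C/(1+|z|)`,
`∫_{I₁}∫_{I₂} k(x−y)² dy dx ≤ C² ln((1+d+ℓ₁)/(1+d))`. -/
theorem crossterm_hs_bound (s₁ ℓ₁ d C : ℝ) (hℓ : 0 < ℓ₁) (hd : 0 < d)
    (I₂ : Set ℝ) (hI₂ : MeasurableSet I₂) (hsub : I₂ ⊆ Set.Ioi (s₁ + ℓ₁ + d))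
    (k : ℝ → ℝ) (hk : Measurable k) (hbound : ∀ z, |k z| ≤ C / (1 + |z|)) :
    (∫ x in Set.Ioo s₁ (s₁ + ℓ₁), ∫ y in I₂, (k (x - y)) ^ 2)
      ≤ C ^ 2 * Real.log ((1 + d + ℓ₁) / (1 + d)) := by
  have hC : 0 ≤ C := by
    have := hbound 0
    have h0 : 0 ≤ C / (1 + |(0:ℝ)|) := le_trans (abs_nonneg _) this
    simpa using h0
  set a : ℝ := s₁ + ℓ₁ + d with ha
  set h : ℝ → ℝ := fun x => C ^ 2 / (1 + (a - x)) with hh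
  -- Step 1: inner bound
  have hinner : ∀ x ∈ Set.Ioo s₁ (s₁ + ℓ₁), (∫ y in I₂, (k (x - y)) ^ 2) ≤ h x := by
    intro x hx
    have hxa : x < a := by have := hx.2; simp only [ha]; linarith
    obtain ⟨hgi, hgval⟩ := aux_ioi_integral (C ^ 2) a x (sq_nonneg C) hxa
    have step1 : (∫ y in I₂, (k (x - y)) ^ 2) ≤ ∫ y in I₂, C ^ 2 / (1 + (y - x)) ^ 2 := by
      apply integral_mono_of_nonneg
      · exact Filter.Eventually.of_forall fun y => sq_nonneg _
      · exact hgi.mono_set hsub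
      · filter_upwards [ae_restrict_mem hI₂] with y hy
        have hxy : x < y := lt_trans hxa (hsub hy)
        have habs : |x - y| = y - x := by rw [abs_sub_comm]; exact abs_of_pos (by linarith)
        have hb := hbound (x - y)
        calc (k (x - y)) ^ 2 = |k (x - y)| ^ 2 := (sq_abs _).symm
          _ ≤ (C / (1 + |x - y|)) ^ 2 := by
              apply pow_le_pow_left₀ (abs_nonneg _) hb
          _ = C ^ 2 / (1 + (y - x)) ^ 2 := by rw [habs, div_pow]
    have step2 : (∫ y in I₂, C ^ 2 / (1 + (y - x)) ^ 2)
        ≤ ∫ y in Set.Ioi a, C ^ 2 / (1 + (y - x)) ^ 2 := by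
      apply setIntegral_mono_set hgi
      · exact Filter.Eventually.of_forall fun y => div_nonneg (sq_nonneg _) (sq_nonneg _)
      · exact HasSubset.Subset.eventuallyLE hsub
    calc (∫ y in I₂, (k (x - y)) ^ 2) ≤ _ := step1
      _ ≤ _ := step2
      _ = h x := hgval
  -- Step 2: integrability and value of the outer dominating integral
  have hne : ∀ x ∈ Set.Icc s₁ (s₁ + ℓ₁), (0:ℝ) < 1 + (a - x) := by
    intro x hx
    have := hx.2
    simp only [ha]; linarith
  have hFderiv : ∀ x ∈ Set.Icc s₁ (s₁ + ℓ₁),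
      HasDerivAt (fun x => -C ^ 2 * Real.log (1 + (a - x))) (h x) x := by
    intro x hx
    have hpos := hne x hx
    have h1 : HasDerivAt (fun x : ℝ => 1 + (a - x)) (-1) x := by
      simpa using ((hasDerivAt_id x).const_sub a).const_add 1
    have h2 := (h1.log hpos.ne').const_mul (-C ^ 2)
    refine h2.congr_deriv ?_
    show _ = C ^ 2 / (1 + (a - x))
    ring
  have hcont : ContinuousOn h (Set.Icc s₁ (s₁ + ℓ₁)) := by
    apply ContinuousOn.div continuousOn_const (Continuous.continuousOn (by continuity))
    intro x hx; exact (hne x hx).ne'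
  have hInt : IntervalIntegrable h volume s₁ (s₁ + ℓ₁) :=
    hcont.intervalIntegrable_of_Icc (by linarith)
  have hval : (∫ x in Set.Ioo s₁ (s₁ + ℓ₁), h x)
      = C ^ 2 * Real.log ((1 + d + ℓ₁) / (1 + d)) := by
    rw [← MeasureTheory.integral_Ioc_eq_integral_Ioo,
      ← intervalIntegral.integral_of_le (by linarith : s₁ ≤ s₁ + ℓ₁)]
    have huIcc : Set.uIcc s₁ (s₁ + ℓ₁) = Set.Icc s₁ (s₁ + ℓ₁) := Set.uIcc_of_le (by linarith)
    rw [intervalIntegral.integral_eq_sub_of_hasDerivAt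
      (fun x hx => hFderiv x (huIcc ▸ hx)) hInt]
    have e1 : 1 + (a - (s₁ + ℓ₁)) = 1 + d := by simp only [ha]; ring
    have e2 : 1 + (a - s₁) = 1 + d + ℓ₁ := by simp only [ha]; ring
    rw [e1, e2, Real.log_div (by linarith) (by linarith)]
    ring
  have hIntOn : IntegrableOn h (Set.Ioo s₁ (s₁ + ℓ₁)) volume := by
    have := (intervalIntegrable_iff_integrableOn_Ioc_of_le (by linarith : s₁ ≤ s₁ + ℓ₁)).mp hInt
    exact this.mono_set Set.Ioo_subset_Ioc_self
  -- Step 3: combine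
  rw [← hval]
  apply integral_mono_of_nonneg
  · exact Filter.Eventually.of_forall fun x => integral_nonneg fun y => sq_nonneg _
  · exact hIntOn
  · filter_upwards [ae_restrict_mem measurableSet_Ioo] with x hx
    exact hinner x hx
end
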